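/- For every α > 0 there exists C = C(α) > 0 such that for all integers k ≥ 1 and 0 ≤ k₀ ≤ k, and all s > 0, setting A = α k₀ + (k − k₀): ∫_{(0,∞)^k} 1[ t_1 + ⋯ + t_k < s ] · ∏_{i=1}^{k₀} t_i^{α−1} dt_1 ⋯ dt_k ≤ (s/A)^A · e^k · C^{k₀}. -/

import Mathlib

open MeasureTheory Real
open scoped BigOperators

lemma card_filter_fin_lt (k k₀ : ℕ) (h : k₀ ≤ k) :
    (Finset.univ.filter (fun i : Fin k => (i : ℕ) < k₀)).card = k₀ := by
  have : (Finset.univ.filter (fun i : Fin k => (i : ℕ) < k₀)) =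
      (Finset.range k₀).attachFin
        (fun m hm => lt_of_lt_of_le (Finset.mem_range.1 hm) h) := by
    ext i; simp [Finset.mem_attachFin]
  rw [this, Finset.card_attachFin, Finset.card_range]

/-- Dirichlet integral estimate (Lemma 3.1, estimate). -/
theorem statement10 (α : ℝ) (hα : 0 < α) :
    ∃ C : ℝ, 0 < C ∧
      ∀ k k₀ : ℕ, 1 ≤ k → k₀ ≤ k → ∀ s : ℝ, 0 < s →
        (∫ t in {t : Fin k → ℝ | (∀ i, 0 < t i) ∧ ∑ i, t i < s},
            ∏ i ∈ Finset.univ.filter (fun i : Fin k => (i : ℕ) < k₀),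
              (t i) ^ (α - 1)) ≤
          (s / (α * k₀ + ((k : ℝ) - k₀))) ^ (α * k₀ + ((k : ℝ) - k₀)) *
            Real.exp k * C ^ k₀ := by
  refine ⟨max 1 (Real.Gamma α * Real.exp (α - 1)), lt_of_lt_of_le one_pos (le_max_left _ _), ?_⟩
  intro k k₀ hk hk₀ s hs
  set C : ℝ := max 1 (Real.Gamma α * Real.exp (α - 1)) with hC
  set A : ℝ := α * k₀ + ((k : ℝ) - k₀) with hA
  have hk0r : (0:ℝ) ≤ (k:ℝ) - k₀ := by
    have := (Nat.cast_le (α := ℝ)).2 hk₀; linarith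
  have hApos : 0 < A := by
    rcases Nat.eq_zero_or_pos k₀ with h0 | h0
    · have : (1:ℝ) ≤ (k:ℝ) := by exact_mod_cast hk
      simp only [hA, h0, Nat.cast_zero, mul_zero, zero_add, sub_zero]
      linarith
    · have : (0:ℝ) < α * k₀ := by
        have : (0:ℝ) < (k₀:ℝ) := by exact_mod_cast h0
        positivity
      linarith
  set l : ℝ := A / s with hl
  have hlpos : 0 < l := div_pos hApos hs
  -- exponents
  set a : Fin k → ℝ := fun i => if (i : ℕ) < k₀ then α else 1 with ha
  have hapos : ∀ i, 0 < a i := by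
    intro i; by_cases h : (i:ℕ) < k₀ <;> simp only [ha, h, if_true, if_false]
    · exact hα
    · exact one_pos
  -- one-dimensional majorant
  set G : Fin k → ℝ → ℝ := fun i =>
    Set.indicator (Set.Ioi 0) (fun t => t ^ (a i - 1) * Real.exp (-(l * t))) with hG
  have hGnn : ∀ i t, 0 ≤ G i t := by
    intro i t
    apply Set.indicator_nonneg
    intro x hx
    exact mul_nonneg (Real.rpow_nonneg (le_of_lt hx) _) (Real.exp_nonneg _)
  have hGint : ∀ i, Integrable (G i) := by
    intro i
    have h := integrableOn_rpow_mul_exp_neg_mul_rpow (p := 1) (s := a i - 1) (b := l)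
      (by linarith [hapos i]) one_pos hlpos
    have h' : IntegrableOn (fun t : ℝ => t ^ (a i - 1) * Real.exp (-(l * t))) (Set.Ioi 0) :=
      h.congr_fun (fun x _ => by simp only [Real.rpow_one, neg_mul]) measurableSet_Ioi
    exact h'.integrable_indicator measurableSet_Ioi
  have hGval : ∀ i, ∫ t, G i t = (1 / l) ^ (a i) * Real.Gamma (a i) := by
    intro i
    rw [hG, MeasureTheory.integral_indicator measurableSet_Ioi]
    exact integral_rpow_mul_exp_neg_mul_Ioi (hapos i) hlpos
  set S : Set (Fin k → ℝ) := {t : Fin k → ℝ | (∀ i, 0 < t i) ∧ ∑ i, t i < s} with hS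
  have hSmeas : MeasurableSet S := by
    have : S = (⋂ i, {t : Fin k → ℝ | 0 < t i}) ∩ {t : Fin k → ℝ | ∑ i, t i < s} := by
      ext t; simp [hS, Set.mem_iInter]
    rw [this]
    exact MeasurableSet.inter
      (MeasurableSet.iInter fun i => measurableSet_lt measurable_const (measurable_pi_apply i))
      (measurableSet_lt (Finset.measurable_sum _ fun i _ => measurable_pi_apply i)
        measurable_const)
  -- pointwise bound
  have hpt : ∀ t : Fin k → ℝ,
      Set.indicator S (fun t => ∏ i ∈ Finset.univ.filter (fun i : Fin k => (i : ℕ) < k₀),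
        (t i) ^ (α - 1)) t ≤ Real.exp (l * s) * ∏ i, G i (t i) := by
    intro t
    have hrhs_nn : 0 ≤ ∏ i, G i (t i) := Finset.prod_nonneg fun i _ => hGnn i (t i)
    by_cases ht : t ∈ S
    · rw [Set.indicator_of_mem ht]
      obtain ⟨htpos, htsum⟩ := ht
      have hGeq : ∀ i, G i (t i) = (t i) ^ (a i - 1) * Real.exp (-(l * t i)) := by
        intro i; rw [hG]; exact Set.indicator_of_mem (htpos i) _
      have hprod : ∏ i, G i (t i)
          = (∏ i ∈ Finset.univ.filter (fun i : Fin k => (i : ℕ) < k₀), (t i) ^ (α - 1))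
            * Real.exp (-(l * ∑ i, t i)) := by
        simp_rw [hGeq]
        rw [Finset.prod_mul_distrib, ← Real.exp_sum]
        congr 1
        · rw [Finset.prod_filter]
          apply Finset.prod_congr rfl
          intro i _
          by_cases h : (i:ℕ) < k₀
          · simp [ha, h]
          · simp [ha, h, Real.rpow_zero]
        · congr 1
          rw [Finset.mul_sum]
          simp
      rw [hprod, ← mul_assoc, mul_comm (Real.exp (l * s)), mul_assoc, ← Real.exp_add]
      have h1 : (1:ℝ) ≤ Real.exp (l * s + -(l * ∑ i, t i)) := by
        apply Real.one_le_exp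
        have : l * ∑ i, t i ≤ l * s := mul_le_mul_of_nonneg_left (le_of_lt htsum) hlpos.le
        linarith
      have hprod_nn : 0 ≤ ∏ i ∈ Finset.univ.filter (fun i : Fin k => (i : ℕ) < k₀),
          (t i) ^ (α - 1) :=
        Finset.prod_nonneg fun i _ => Real.rpow_nonneg (htpos i).le _
      exact le_mul_of_one_le_right hprod_nn h1
    · rw [Set.indicator_of_notMem ht]
      positivity
  -- main estimate
  have key : (∫ t in S, ∏ i ∈ Finset.univ.filter (fun i : Fin k => (i : ℕ) < k₀),
      (t i) ^ (α - 1)) ≤ Real.exp (l * s) * ∏ i, ∫ t, G i t := by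
    rw [← MeasureTheory.integral_indicator hSmeas]
    calc _ ≤ ∫ t : Fin k → ℝ, Real.exp (l * s) * ∏ i, G i (t i) := by
            apply MeasureTheory.integral_mono_of_nonneg
            · filter_upwards with t
              apply Set.indicator_nonneg
              intro x hx
              exact Finset.prod_nonneg fun i _ => Real.rpow_nonneg (hx.1 i).le _
            · exact (Integrable.fintype_prod hGint).const_mul _
            · filter_upwards with t using hpt t
      _ = Real.exp (l * s) * ∏ i, ∫ t, G i t := by
            rw [MeasureTheory.integral_const_mul, integral_fintype_prod_volume_eq_prod]
  -- cardinalities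
  have hcard := card_filter_fin_lt k k₀ hk₀
  have hcard' : (Finset.univ.filter (fun i : Fin k => ¬ ((i : ℕ) < k₀))).card = k - k₀ := by
    have h2 := Finset.card_filter_add_card_filter_not
      (s := (Finset.univ : Finset (Fin k))) (p := fun i : Fin k => (i : ℕ) < k₀)
    beta_reduce at h2
    rw [hcard, Finset.card_univ, Fintype.card_fin] at h2
    omega
  have hsum : ∑ i, a i = A := by
    rw [ha]
    rw [Finset.sum_ite, Finset.sum_const, Finset.sum_const, hcard, hcard']
    have : ((k - k₀ : ℕ) : ℝ) = (k:ℝ) - k₀ := by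
      rw [Nat.cast_sub hk₀]
    rw [nsmul_eq_mul, nsmul_eq_mul, this, hA]
    ring
  have hprodval : (∏ i, ∫ t, G i t) = (s / A) ^ A * Real.Gamma α ^ k₀ := by
    simp_rw [hGval]
    rw [Finset.prod_mul_distrib]
    congr 1
    · rw [← Real.rpow_sum_of_pos (by positivity) a Finset.univ, hsum]
      congr 1
      rw [hl, one_div_div]
    · have : ∀ i : Fin k, Real.Gamma (a i) = if (i:ℕ) < k₀ then Real.Gamma α else 1 := by
        intro i
        by_cases h : (i:ℕ) < k₀ <;> simp [ha, h, Real.Gamma_one]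
      simp_rw [this]
      rw [Finset.prod_ite, Finset.prod_const, Finset.prod_const, hcard, one_pow, mul_one]
  have hls : l * s = A := div_mul_cancel₀ A (ne_of_gt hs)
  have hexpA : Real.exp A = Real.exp k * Real.exp (α - 1) ^ k₀ := by
    have : A = (k:ℝ) + (k₀:ℝ) * (α - 1) := by rw [hA]; ring
    rw [this, Real.exp_add, Real.exp_nat_mul]
  calc (∫ t in S, ∏ i ∈ Finset.univ.filter (fun i : Fin k => (i : ℕ) < k₀), (t i) ^ (α - 1))
      ≤ Real.exp (l * s) * ∏ i, ∫ t, G i t := key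
    _ = (s / A) ^ A * Real.exp k * (Real.Gamma α * Real.exp (α - 1)) ^ k₀ := by
        rw [hprodval, hls, hexpA, mul_pow]
        ring
    _ ≤ (s / A) ^ A * Real.exp k * C ^ k₀ := by
        apply mul_le_mul_of_nonneg_left
        · apply pow_le_pow_left₀
          · have := Real.Gamma_pos_of_pos hα
            positivity
          · exact le_max_right _ _
        · positivity
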